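/- Partial deduction lemma: let Λ be a fuzzy theory on a language L, let Γ be a set of formulae, and let Λ[Γ] = Λ ∪ { ∅ ⊢ φ : φ ∈ Γ }. Then (1) if (Γ ∪ Δ ⊢ ψ) ∈ Λ^⊢ then (Δ ⊢ ψ) ∈ (Λ[Γ])^⊢; and (2) if Δ ⊢ ψ is derivable from Λ[Γ] without using the substitution rule Sub, then (Γ ∪ Δ ⊢ ψ) ∈ Λ^⊢. -/
import Mathlib


universe u

/-- A signature: operation symbols with positive arities, and constant symbols. -/
structure Signature : Type (u + 1) where
  Op : Type u
  ar : Op → ℕ+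
  Const : Type u

/-- Terms of the language `(S, X)`: inductively built from variables, constants and
operation applications. -/
inductive Term (S : Signature.{u}) (X : Type u) : Type u
  | var : X → Term S X
  | const : S.Const → Term S X
  | op (f : S.Op) : (Fin (S.ar f : ℕ) → Term S X) → Term S X

/-- Formulae: equations `s ≡ t` and membership propositions `∃_l t`. -/
inductive Formula (H : Type u) (S : Signature.{u}) (X : Type u) : Type u
  | eq : Term S X → Term S X → Formula H S X
  | mem : H → Term S X → Formula H S X

/-- A sequent `Γ ⊢ φ`. -/
abbrev Sequent (H : Type u) (S : Signature.{u}) (X : Type u) : Type u :=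
  Set (Formula H S X) × Formula H S X

/-- A fuzzy theory: a set of sequents. -/
abbrev Theory (H : Type u) (S : Signature.{u}) (X : Type u) : Type u :=
  Set (Sequent H S X)

/-- Substitution of terms for variables in a term. -/
def Term.subst {S : Signature.{u}} {X : Type u} (σ : X → Term S X) :
    Term S X → Term S X
  | .var x => σ x
  | .const c => .const c
  | .op f ts => .op f fun i => (ts i).subst σ

/-- Substitution of terms for variables in a formula. -/
def Formula.subst {H : Type u} {S : Signature.{u}} {X : Type u} (σ : X → Term S X) :
    Formula H S X → Formula H S X
  | .eq s t => .eq (s.subst σ) (t.subst σ)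
  | .mem l t => .mem l (t.subst σ)

/-- The fuzzy sequent calculus, parametrized by a flag `allowSub` indicating whether
the substitution rule `Sub` may be used.  `Deriv Λ true Γ φ` means that `Γ ⊢ φ`
belongs to the deductive closure `Λ^⊢`, while `Deriv Λ false Γ φ` means that `Γ ⊢ φ`
is derivable from `Λ` without using the rule `Sub`. -/
inductive Deriv {H : Type u} [Order.Frame H] {S : Signature.{u}} {X : Type u}
    (Λ : Theory H S X) (allowSub : Bool) :
    Set (Formula H S X) → Formula H S X → Prop
  | ax {Γ φ} : (Γ, φ) ∈ Λ → Deriv Λ allowSub Γ φ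
  | assum {Γ φ} : φ ∈ Γ → Deriv Λ allowSub Γ φ
  | weak {Γ Δ φ} : Deriv Λ allowSub Γ φ → Deriv Λ allowSub (Γ ∪ Δ) φ
  | cut {Γ Φ ψ} : (∀ φ ∈ Φ, Deriv Λ allowSub Γ φ) → Deriv Λ allowSub Φ ψ →
      Deriv Λ allowSub Γ ψ
  | refl {Γ t} : Deriv Λ allowSub Γ (.eq t t)
  | symm {Γ s t} : Deriv Λ allowSub Γ (.eq s t) → Deriv Λ allowSub Γ (.eq t s)
  | trans {Γ s t u} : Deriv Λ allowSub Γ (.eq s t) → Deriv Λ allowSub Γ (.eq t u) →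
      Deriv Λ allowSub Γ (.eq s u)
  | sub {Γ φ} (σ : X → Term S X) : allowSub = true →
      Deriv Λ allowSub Γ φ → Deriv Λ allowSub (Formula.subst σ '' Γ) (φ.subst σ)
  | cong {Γ} (f : S.Op) (ts ss : Fin (S.ar f : ℕ) → Term S X) :
      (∀ i, Deriv Λ allowSub Γ (.eq (ts i) (ss i))) →
      Deriv Λ allowSub Γ (.eq (.op f ts) (.op f ss))
  | inf {Γ t} : Deriv Λ allowSub Γ (.mem ⊥ t)
  | mon {Γ l t} (l' : H) : Deriv Λ allowSub Γ (.mem l t) →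
      Deriv Λ allowSub Γ (.mem (l ⊓ l') t)
  | exp {Γ} (f : S.Op) (ts : Fin (S.ar f : ℕ) → Term S X) (ls : Fin (S.ar f : ℕ) → H) :
      (∀ i, Deriv Λ allowSub Γ (.mem (ls i) (ts i))) →
      Deriv Λ allowSub Γ (.mem (⨅ i, ls i) (.op f ts))
  | sup {Γ t} (L : Set H) :
      (∀ l ∈ L, Deriv Λ allowSub Γ (.mem l t)) → Deriv Λ allowSub Γ (.mem (sSup L) t)
  | fn {Γ l t s} : Deriv Λ allowSub Γ (.eq t s) → Deriv Λ allowSub Γ (.mem l t) →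
      Deriv Λ allowSub Γ (.mem l s)

/-- The theory `Λ[Γ]`: `Λ` extended with the axioms `∅ ⊢ φ` for each `φ ∈ Γ`. -/
def extendTheory {H : Type u} [Order.Frame H] {S : Signature.{u}} {X : Type u}
    (Λ : Theory H S X) (Γ : Set (Formula H S X)) : Theory H S X :=
  Λ ∪ { p | p.1 = (∅ : Set (Formula H S X)) ∧ p.2 ∈ Γ }


/-- Monotonicity of derivability in the theory. -/
theorem Deriv.mono {H : Type u} [Order.Frame H] {S : Signature.{u}} {X : Type u}
    {Λ Λ' : Theory H S X} {b : Bool} {Γ : Set (Formula H S X)} {φ : Formula H S X}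
    (hΛ : Λ ⊆ Λ') (h : Deriv Λ b Γ φ) : Deriv Λ' b Γ φ := by
  induction h with
  | ax h => exact .ax (hΛ h)
  | assum h => exact .assum h
  | weak _ ih => exact .weak ih
  | cut _ _ ih1 ih2 => exact .cut ih1 ih2
  | refl => exact .refl
  | symm _ ih => exact .symm ih
  | trans _ _ ih1 ih2 => exact .trans ih1 ih2
  | sub σ hb _ ih => exact .sub σ hb ih
  | cong f ts ss _ ih => exact .cong f ts ss ih
  | inf => exact .inf
  | mon l' _ ih => exact .mon l' ih
  | exp f ts ls _ ih => exact .exp f ts ls ih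
  | sup L _ ih => exact .sup L ih
  | fn _ _ ih1 ih2 => exact .fn ih1 ih2

/-- Partial deduction lemma: (1) if `Γ ∪ Δ ⊢ ψ` is in `Λ^⊢` then `Δ ⊢ ψ` is in
`(Λ[Γ])^⊢`; (2) if `Δ ⊢ ψ` is derivable from `Λ[Γ]` without using the rule `Sub`,
then `Γ ∪ Δ ⊢ ψ` is in `Λ^⊢`. -/
theorem partial_deduction_lemma {H : Type u} [Order.Frame H] {S : Signature.{u}}
    {X : Type u} (Λ : Theory H S X) (Γ : Set (Formula H S X)) :
    (∀ (Δ : Set (Formula H S X)) (ψ : Formula H S X),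
        Deriv Λ true (Γ ∪ Δ) ψ → Deriv (extendTheory Λ Γ) true Δ ψ) ∧
    (∀ (Δ : Set (Formula H S X)) (ψ : Formula H S X),
        Deriv (extendTheory Λ Γ) false Δ ψ → Deriv Λ true (Γ ∪ Δ) ψ) := by
  constructor
  · intro Δ ψ h
    refine Deriv.cut (Φ := Γ ∪ Δ) ?_ (h.mono Set.subset_union_left)
    intro φ hφ
    rcases hφ with hφ | hφ
    · have : Deriv (extendTheory Λ Γ) true (∅ ∪ Δ) φ :=
        Deriv.weak (.ax (Or.inr ⟨rfl, hφ⟩))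
      simpa using this
    · exact .assum hφ
  · intro Δ ψ h
    induction h with
    | @ax Δ φ h =>
      rcases h with h | ⟨h1, h2⟩
      · rw [Set.union_comm]; exact Deriv.weak (.ax h)
      · exact .assum (Or.inl h2)
    | assum h => exact .assum (Or.inr h)
    | @weak Δ₁ Δ₂ φ _ ih =>
      rw [← Set.union_assoc]; exact Deriv.weak ih
    | @cut Δ Φ ψ _ _ ih1 ih2 =>
      refine Deriv.cut (Φ := Γ ∪ Φ) ?_ ih2
      intro φ hφ
      rcases hφ with hφ | hφ
      · exact .assum (Or.inl hφ)
      · exact ih1 φ hφ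
    | refl => exact .refl
    | symm _ ih => exact .symm ih
    | trans _ _ ih1 ih2 => exact .trans ih1 ih2
    | sub σ hb => exact absurd hb (by simp)
    | cong f ts ss _ ih => exact .cong f ts ss ih
    | inf => exact .inf
    | mon l' _ ih => exact .mon l' ih
    | exp f ts ls _ ih => exact .exp f ts ls ih
    | sup L _ ih => exact .sup L ih
    | fn _ _ ih1 ih2 => exact .fn ih1 ih2
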